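/- Let s ≥ 1 and k ≥ 2 be integers and z a real number. Then Σ_{ℓ=0}^{s} (−kz)^ℓ/ℓ! = (Σ_{ℓ=0}^{s} (−z)^ℓ/ℓ!)^k if and only if (s!)^{k−1} · ∫_{−kz}^{∞} t^s e^{−t} dt = (∫_{−z}^{∞} t^s e^{−t} dt)^k. -/

import Mathlib

open MeasureTheory Finset

private lemma aux_hasDerivAt (s : ℕ) (t : ℝ) :
    HasDerivAt (fun t : ℝ => -(Real.exp (-t) *
        ∑ ℓ ∈ Finset.range (s + 1), ((s.factorial : ℝ) / ℓ.factorial) * t ^ ℓ))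
      (t ^ s * Real.exp (-t)) t := by
  have hP : HasDerivAt (fun t : ℝ =>
      ∑ ℓ ∈ Finset.range (s + 1), ((s.factorial : ℝ) / ℓ.factorial) * t ^ ℓ)
      (∑ ℓ ∈ Finset.range s, ((s.factorial : ℝ) / ℓ.factorial) * t ^ ℓ) t := by
    have h : HasDerivAt (fun t : ℝ =>
        ∑ ℓ ∈ Finset.range (s + 1), ((s.factorial : ℝ) / ℓ.factorial) * t ^ ℓ)
        (∑ ℓ ∈ Finset.range (s + 1),
          ((s.factorial : ℝ) / ℓ.factorial) * (ℓ * t ^ (ℓ - 1))) t := by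
      refine HasDerivAt.fun_sum fun ℓ _ => ?_
      exact (hasDerivAt_pow ℓ t).const_mul _
    convert h using 1
    rw [Finset.sum_range_succ']
    simp only [Nat.cast_zero, zero_mul, mul_zero, add_zero]
    refine Finset.sum_congr rfl fun j _ => ?_
    have : ((s.factorial : ℝ) / (j + 1).factorial) * ((j + 1 : ℕ) : ℝ) =
        (s.factorial : ℝ) / j.factorial := by
      rw [Nat.factorial_succ]
      push_cast
      field_simp
    rw [Nat.add_sub_cancel, ← this]
    push_cast
    ring
  have hE : HasDerivAt (fun t : ℝ => Real.exp (-t)) (-Real.exp (-t)) t := by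
    simpa using (hasDerivAt_neg t).exp
  have := (hE.fun_mul hP).fun_neg
  refine this.congr_deriv ?_
  have hsum : ∑ ℓ ∈ Finset.range (s + 1), ((s.factorial : ℝ) / ℓ.factorial) * t ^ ℓ =
      (∑ ℓ ∈ Finset.range s, ((s.factorial : ℝ) / ℓ.factorial) * t ^ ℓ) + t ^ s := by
    rw [Finset.sum_range_succ, div_self (by positivity : (s.factorial : ℝ) ≠ 0), one_mul]
  rw [hsum]
  ring

private lemma aux_integrable (s : ℕ) (x : ℝ) :
    IntegrableOn (fun t : ℝ => t ^ s * Real.exp (-t)) (Set.Ioi x) := by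
  apply integrable_of_isBigO_exp_neg (b := 1/2) (by norm_num)
  · exact ((continuous_pow s).mul (Real.continuous_exp.comp continuous_neg)).continuousOn
  · have h1 : Filter.Tendsto (fun t : ℝ => t ^ s * Real.exp (-(t / 2))) Filter.atTop (nhds 0) := by
      have h2 : Filter.Tendsto (fun t : ℝ => t / 2) Filter.atTop Filter.atTop :=
        Filter.tendsto_id.atTop_div_const two_pos
      have h3 := (Real.tendsto_pow_mul_exp_neg_atTop_nhds_zero s).comp h2
      have h4 : Filter.Tendsto (fun t : ℝ => (2:ℝ)^s * ((t/2) ^ s * Real.exp (-(t / 2))))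
          Filter.atTop (nhds ((2:ℝ)^s * 0)) := h3.const_mul _
      rw [mul_zero] at h4
      refine h4.congr fun t => ?_
      rw [div_pow, ← mul_assoc, mul_div_cancel₀]
      positivity
    have hbig : (fun t : ℝ => t ^ s * Real.exp (-(t / 2))) =O[Filter.atTop] (fun _ : ℝ => (1:ℝ)) :=
      h1.isBigO_one ℝ
    have := hbig.mul (Asymptotics.isBigO_refl (fun t : ℝ => Real.exp (-(1/2) * t)) Filter.atTop)
    refine this.congr (fun t => ?_) (fun t => one_mul _)
    rw [mul_assoc, ← Real.exp_add]
    ring_nf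

private lemma aux_integral (s : ℕ) (x : ℝ) :
    ∫ t in Set.Ioi x, t ^ s * Real.exp (-t) =
      Real.exp (-x) * ∑ ℓ ∈ Finset.range (s + 1), ((s.factorial : ℝ) / ℓ.factorial) * x ^ ℓ := by
  have htend : Filter.Tendsto (fun t : ℝ => -(Real.exp (-t) *
      ∑ ℓ ∈ Finset.range (s + 1), ((s.factorial : ℝ) / ℓ.factorial) * t ^ ℓ))
      Filter.atTop (nhds 0) := by
    have : Filter.Tendsto (fun t : ℝ =>
        ∑ ℓ ∈ Finset.range (s + 1), ((s.factorial : ℝ) / ℓ.factorial) * (t ^ ℓ * Real.exp (-t)))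
        Filter.atTop (nhds (∑ ℓ ∈ Finset.range (s + 1), ((s.factorial : ℝ) / ℓ.factorial) * 0)) := by
      refine tendsto_finset_sum _ fun ℓ _ => ?_
      exact (Real.tendsto_pow_mul_exp_neg_atTop_nhds_zero ℓ).const_mul _
    simp only [mul_zero, Finset.sum_const_zero] at this
    have h0 : Filter.Tendsto (fun t : ℝ => -(∑ ℓ ∈ Finset.range (s + 1),
        ((s.factorial : ℝ) / ℓ.factorial) * (t ^ ℓ * Real.exp (-t)))) Filter.atTop (nhds (-0)) :=
      this.neg
    rw [neg_zero] at h0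
    refine h0.congr fun t => ?_
    rw [Finset.mul_sum]
    congr 1
    refine Finset.sum_congr rfl fun ℓ _ => ?_
    ring
  have := integral_Ioi_of_hasDerivAt_of_tendsto' (f' := fun t => t ^ s * Real.exp (-t))
    (fun t _ => aux_hasDerivAt s t) (aux_integrable s x) htend
  rw [this]
  ring

theorem stmt_8 (s k : ℕ) (hs : 1 ≤ s) (hk : 2 ≤ k) (z : ℝ) :
    (∑ ℓ ∈ Finset.range (s + 1), (-((k : ℝ) * z)) ^ ℓ / ℓ.factorial =
        (∑ ℓ ∈ Finset.range (s + 1), (-z) ^ ℓ / ℓ.factorial) ^ k) ↔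
      ((s.factorial : ℝ)) ^ (k - 1) * (∫ t in Set.Ioi (-((k : ℝ) * z)), t ^ s * Real.exp (-t)) =
        (∫ t in Set.Ioi (-z), t ^ s * Real.exp (-t)) ^ k := by
  rw [aux_integral, aux_integral]
  set S1 := ∑ ℓ ∈ Finset.range (s + 1), (-((k : ℝ) * z)) ^ ℓ / ℓ.factorial with hS1
  set S2 := ∑ ℓ ∈ Finset.range (s + 1), (-z) ^ ℓ / ℓ.factorial with hS2
  have e1 : ∑ ℓ ∈ Finset.range (s + 1), ((s.factorial : ℝ) / ℓ.factorial) * (-((k : ℝ) * z)) ^ ℓ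
      = (s.factorial : ℝ) * S1 := by
    rw [hS1, Finset.mul_sum]; refine Finset.sum_congr rfl fun ℓ _ => ?_; ring
  have e2 : ∑ ℓ ∈ Finset.range (s + 1), ((s.factorial : ℝ) / ℓ.factorial) * (-z) ^ ℓ
      = (s.factorial : ℝ) * S2 := by
    rw [hS2, Finset.mul_sum]; refine Finset.sum_congr rfl fun ℓ _ => ?_; ring
  rw [e1, e2]
  have hexp : Real.exp (- -((k : ℝ) * z)) = Real.exp (- -z) ^ k := by
    rw [neg_neg, neg_neg, ← Real.exp_nat_mul]
  have hfac : (s.factorial : ℝ) ^ (k - 1) * (s.factorial : ℝ) = (s.factorial : ℝ) ^ k := by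
    rw [← pow_succ]
    congr 1
    omega
  constructor
  · intro h
    rw [hexp, h]
    rw [show (s.factorial : ℝ) ^ (k-1) * (Real.exp (- -z) ^ k * ((s.factorial : ℝ) * S2 ^ k))
        = ((s.factorial : ℝ) ^ (k-1) * (s.factorial : ℝ)) * (Real.exp (- -z) ^ k * S2 ^ k) by ring,
      hfac]
    rw [mul_pow, mul_pow]
    ring
  · intro h
    rw [hexp] at h
    have h' : ((s.factorial : ℝ) ^ k * Real.exp (- -z) ^ k) * S1
        = ((s.factorial : ℝ) ^ k * Real.exp (- -z) ^ k) * S2 ^ k := by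
      rw [← hfac]
      calc ((s.factorial : ℝ) ^ (k-1) * (s.factorial : ℝ) * Real.exp (- -z) ^ k) * S1
          = (s.factorial : ℝ) ^ (k-1) * (Real.exp (- -z) ^ k * ((s.factorial : ℝ) * S1)) := by ring
        _ = (Real.exp (- -z) * ((s.factorial : ℝ) * S2)) ^ k := h
        _ = (s.factorial : ℝ) ^ (k-1) * (s.factorial : ℝ) * Real.exp (- -z) ^ k * S2 ^ k := by
            rw [mul_pow, mul_pow, ← hfac]; ring
    have hne : ((s.factorial : ℝ) ^ k * Real.exp (- -z) ^ k) ≠ 0 := by positivity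
    exact mul_left_cancel₀ hne h'
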